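/- The set 𝔖₀₀^{SL} := {(x₀,y₀) ∈ F × F : x₀·y₀^q − x₀^q·y₀ = 1, x₀^{q²−1} = −1 and y₀^{q²−1} = −1} is finite and has exactly q(q²−1) elements (the same as the order of SL₂(𝔽_q)). -/

import Mathlib

open Polynomial

/-- The set `𝔖₀₀` for the `SL₂` case. -/
def S00SL (q : ℕ) (F : Type*) [Field F] : Set (F × F) :=
  {xy | xy.1 * xy.2 ^ q - xy.1 ^ q * xy.2 = 1 ∧
    xy.1 ^ (q ^ 2 - 1) = -1 ∧ xy.2 ^ (q ^ 2 - 1) = -1}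

/-- Auxiliary fiber polynomial `x·Y^q − x^q·Y − 1`. -/
noncomputable def gpoly (q : ℕ) {F : Type*} [Field F] (x : F) : F[X] :=
  C x * X ^ q - C (x ^ q) * X - 1

lemma gpoly_natDegree (q : ℕ) {F : Type*} [Field F] (x : F) (hx : x ≠ 0) (hq : 2 ≤ q) :
    (gpoly q x).natDegree = q := by
  have h1 : q ≠ 1 := by omega
  have h0 : q ≠ 0 := by omega
  unfold gpoly
  compute_degree!
  · simp [h1, h0, hx]
  all_goals omega

lemma gpoly_ne_zero (q : ℕ) {F : Type*} [Field F] (x : F) (hx : x ≠ 0) (hq : 2 ≤ q) :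
    gpoly q x ≠ 0 := by
  intro h
  have := gpoly_natDegree q x hx hq
  rw [h, natDegree_zero] at this
  omega

lemma gpoly_separable (q : ℕ) {F : Type*} [Field F] (x : F) (hx : x ≠ 0)
    (hqF : ((q : ℕ) : F) = 0) : (gpoly q x).Separable := by
  have hd : (gpoly q x).derivative = -C (x ^ q) := by
    unfold gpoly
    rw [derivative_sub, derivative_sub, derivative_one, derivative_C_mul, derivative_C_mul,
      derivative_X_pow, derivative_X]
    simp [hqF]
  unfold Polynomial.Separable
  rw [hd]
  refine ⟨0, C (-(x ^ q)⁻¹), ?_⟩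
  rw [zero_mul, zero_add, C_neg, neg_mul_neg, ← C_mul,
    inv_mul_cancel₀ (pow_ne_zero _ hx), C_1]

lemma gpoly_mem_roots (q : ℕ) {F : Type*} [Field F] (x : F) (hx : x ≠ 0) (hq : 2 ≤ q)
    (y : F) : y ∈ (gpoly q x).roots ↔ x * y ^ q - x ^ q * y = 1 := by
  rw [mem_roots (gpoly_ne_zero q x hx hq), IsRoot, gpoly]
  simp only [eval_sub, eval_mul, eval_one, eval_pow, eval_X, eval_C]
  constructor
  · intro h; linear_combination h
  · intro h; linear_combination h

theorem stmt13 (p : ℕ) (hp : p.Prime) (hodd : Odd p) (q : ℕ)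
    (hq : ∃ n : ℕ, 0 < n ∧ q = p ^ n)
    (F : Type*) [Field F] [IsAlgClosed F] [CharP F p] :
    (S00SL q F).Finite ∧ (S00SL q F).ncard = q * (q ^ 2 - 1) := by
  haveI := Fact.mk hp
  classical
  obtain ⟨n, hn, rfl⟩ := hq
  set q := p ^ n with hqdef
  have hq2 : 2 ≤ q := Nat.one_lt_pow hn.ne' hp.one_lt
  have hq21 : 1 ≤ q ^ 2 := Nat.one_le_pow _ _ (by omega)
  have hq4 : 4 ≤ q ^ 2 := by calc (4:ℕ) = 2^2 := rfl
                                _ ≤ q^2 := Nat.pow_le_pow_left hq2 2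
  have hqF : ((q : ℕ) : F) = 0 := by
    rw [hqdef, Nat.cast_pow, CharP.cast_eq_zero F p, zero_pow hn.ne']
  have hfrob : ∀ a b : F, (a - b) ^ q = a ^ q - b ^ q := fun a b => sub_pow_char_pow a b n
  have hnz : ∀ x : F, x ^ (q ^ 2 - 1) = -1 → x ≠ 0 := by
    intro x hx h
    rw [h, zero_pow (by omega)] at hx
    exact one_ne_zero (neg_eq_zero.mp hx.symm)
  -- the polynomial whose roots are the admissible x's
  set f : F[X] := X ^ (q ^ 2 - 1) - C (-1) with hf
  have hfsep : f.Separable := by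
    refine separable_X_pow_sub_C (-1) ?_ (by norm_num)
    rw [Nat.cast_sub hq21, Nat.cast_pow, hqF]
    norm_num
  have hfdeg : f.natDegree = q ^ 2 - 1 := natDegree_X_pow_sub_C
  have hfne : f ≠ 0 := by
    intro h
    rw [h, natDegree_zero] at hfdeg
    omega
  have hA : ∀ x : F, x ∈ f.roots.toFinset ↔ x ^ (q ^ 2 - 1) = -1 := by
    intro x
    rw [Multiset.mem_toFinset, mem_roots hfne, IsRoot, hf]
    simp [sub_eq_zero, eq_neg_iff_add_eq_zero]
  have hAcard : f.roots.toFinset.card = q ^ 2 - 1 := by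
    rw [Multiset.toFinset_card_of_nodup (nodup_roots hfsep),
      splits_iff_card_roots.mp (IsAlgClosed.splits f), hfdeg]
  have hB : ∀ x : F, x ≠ 0 → ∀ y : F,
      (y ∈ (gpoly q x).roots.toFinset ↔ x * y ^ q - x ^ q * y = 1) := by
    intro x hx y
    rw [Multiset.mem_toFinset, gpoly_mem_roots q x hx hq2]
  have hBcard : ∀ x : F, x ≠ 0 → (gpoly q x).roots.toFinset.card = q := by
    intro x hx
    rw [Multiset.toFinset_card_of_nodup (nodup_roots (gpoly_separable q x hx hqF)),
      splits_iff_card_roots.mp (IsAlgClosed.splits (gpoly q x)),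
      gpoly_natDegree q x hx hq2]
  -- the full solution set as a Finset
  set T : Finset (F × F) := f.roots.toFinset.biUnion
      (fun x => ((gpoly q x).roots.toFinset).image (fun y => (x, y))) with hT
  have hS : S00SL q F = ↑T := by
    ext ⟨x, y⟩
    simp only [S00SL, Set.mem_setOf_eq, Finset.coe_biUnion, Set.mem_iUnion, Finset.mem_coe,
      Finset.mem_image, hT, Finset.mem_biUnion]
    constructor
    · rintro ⟨h1, h2, h3⟩
      exact ⟨x, (hA x).mpr h2, y, (hB x (hnz x h2) y).mpr h1, rfl⟩
    · rintro ⟨x', hx', y', hy', heq⟩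
      injection heq with he1 he2
      subst he1; subst he2
      have h2 := (hA x').mp hx'
      have hx0 : x' ≠ 0 := hnz x' h2
      have h1 := (hB x' hx0 y').mp hy'
      refine ⟨h1, h2, ?_⟩
      have hy0 : y' ≠ 0 := by
        intro h
        rw [h, zero_pow (by omega : q ≠ 0), mul_zero, mul_zero, sub_zero] at h1
        exact one_ne_zero h1.symm
      have hxq2 : x' ^ (q * q) = -x' := by
        calc x' ^ (q * q) = x' ^ (q ^ 2 - 1) * x' := by
              rw [← pow_succ, Nat.sub_add_cancel hq21, pow_two]
          _ = -x' := by rw [h2]; ring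
      have e1 : (x' * y' ^ q - x' ^ q * y') ^ q
          = x' ^ q * y' ^ (q * q) - x' ^ (q * q) * y' ^ q := by
        rw [hfrob, mul_pow, mul_pow, ← pow_mul, ← pow_mul]
      rw [h1, one_pow, hxq2] at e1
      have e2 : x' ^ q * y' ^ (q * q) = x' ^ q * (-y') := by
        linear_combination -e1 - h1
      have e3 : y' ^ (q * q) = -y' := mul_left_cancel₀ (pow_ne_zero _ hx0) e2
      have e4 : y' ^ (q ^ 2 - 1) * y' = -1 * y' := by
        rw [← pow_succ, Nat.sub_add_cancel hq21, pow_two, e3]; ring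
      exact mul_right_cancel₀ hy0 e4
  have hdisj : ∀ x ∈ f.roots.toFinset, ∀ x' ∈ f.roots.toFinset, x ≠ x' →
      Disjoint (((gpoly q x).roots.toFinset).image (fun y => (x, y)))
        (((gpoly q x').roots.toFinset).image (fun y => (x', y))) := by
    intro x _ x' _ hne
    rw [Finset.disjoint_left]
    rintro ⟨a, b⟩ h h'
    simp only [Finset.mem_image] at h h'
    obtain ⟨y, _, hy⟩ := h
    obtain ⟨y', _, hy'⟩ := h'
    injection hy with hy1 _
    injection hy' with hy1' _
    exact hne (hy1.trans hy1'.symm)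
  have hTcard : T.card = q * (q ^ 2 - 1) := by
    rw [hT, Finset.card_biUnion hdisj]
    have hterm : ∀ x ∈ f.roots.toFinset,
        (((gpoly q x).roots.toFinset).image (fun y => (x, y))).card = q := by
      intro x hx
      rw [Finset.card_image_of_injective _ (Prod.mk_right_injective x)]
      exact hBcard x (hnz x ((hA x).mp hx))
    rw [Finset.sum_congr rfl hterm, Finset.sum_const, hAcard, smul_eq_mul, Nat.mul_comm]
  rw [hS]
  exact ⟨T.finite_toSet, by rw [Set.ncard_coe_finset, hTcard]⟩
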